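/- Let x_1 ≤ ... ≤ x_ω be real numbers in [0,1], let m = x_⌈ω/2⌉, Δ = max_{z∈[0,1]} Σ_j |z - x_j|, δ = Σ_j |m - x_j|. If Δ > δ, then the satisfaction at 1/2, namely 1 - (Σ_j |1/2 - x_j| - δ)/(Δ - δ), is at least 1/2. -/

import Mathlib

lemma aux_convex {n : ℕ} (x : Fin n → ℝ) (m e lam : ℝ) (h0 : 0 ≤ lam) (h1 : lam ≤ 1)
    (hc : (1 - lam) * m + lam * e = 1/2) :
    ∑ j, |1/2 - x j| ≤ (1 - lam) * ∑ j, |m - x j| + lam * ∑ j, |e - x j| := by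
  rw [Finset.mul_sum, Finset.mul_sum, ← Finset.sum_add_distrib]
  apply Finset.sum_le_sum
  intro j _
  have : (1/2 : ℝ) - x j = (1 - lam) * (m - x j) + lam * (e - x j) := by
    rw [← hc]; ring
  rw [this]
  calc |(1 - lam) * (m - x j) + lam * (e - x j)|
      ≤ |(1 - lam) * (m - x j)| + |lam * (e - x j)| := abs_add_le _ _
    _ = (1 - lam) * |m - x j| + lam * |e - x j| := by
        rw [abs_mul, abs_mul, abs_of_nonneg (by linarith), abs_of_nonneg h0]

theorem stmt_5 (ω : ℕ) (x : Fin (ω + 1) → ℝ) (hmono : Monotone x)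
    (hx : ∀ j, x j ∈ Set.Icc (0 : ℝ) 1)
    (m : ℝ) (hm : m = x ⟨ω / 2, by omega⟩)
    (Δ : ℝ) (hΔ : IsGreatest ((fun z => ∑ j, |z - x j|) '' Set.Icc (0 : ℝ) 1) Δ)
    (δ : ℝ) (hδ : δ = ∑ j, |m - x j|)
    (hgt : Δ > δ) :
    1 - (∑ j, |1 / 2 - x j| - δ) / (Δ - δ) ≥ 1 / 2 := by
  have hm0 : 0 ≤ m := by rw [hm]; exact (hx _).1
  have hm1 : m ≤ 1 := by rw [hm]; exact (hx _).2
  have hf0 : ∑ j, |(0:ℝ) - x j| ≤ Δ :=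
    hΔ.2 ⟨0, Set.mem_Icc.mpr ⟨le_refl _, zero_le_one⟩, rfl⟩
  have hf1 : ∑ j, |(1:ℝ) - x j| ≤ Δ :=
    hΔ.2 ⟨1, Set.mem_Icc.mpr ⟨zero_le_one, le_refl _⟩, rfl⟩
  have key : ∑ j, |(1:ℝ)/2 - x j| ≤ (Δ + δ) / 2 := by
    rcases le_total m (1/2) with hc | hc
    · -- use endpoint 1, lam = (1/2 - m)/(1 - m)
      have hd : (0:ℝ) < 1 - m := by linarith
      set lam : ℝ := (1/2 - m) / (1 - m) with hlam
      have h0 : 0 ≤ lam := div_nonneg (by linarith) (le_of_lt hd)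
      have h2 : lam ≤ 1/2 := by
        rw [hlam, div_le_iff₀ hd]; nlinarith
      have hcc : (1 - lam) * m + lam * 1 = 1/2 := by
        rw [hlam]; field_simp; ring
      have := aux_convex x m 1 lam h0 (by linarith) hcc
      rw [← hδ] at this
      nlinarith [mul_nonneg h0 (sub_nonneg.mpr hf1),
        mul_nonneg (by linarith : (0:ℝ) ≤ 1/2 - lam) (by linarith : (0:ℝ) ≤ Δ - δ)]
    · -- use endpoint 0, lam = (m - 1/2)/m
      have hd : (0:ℝ) < m := by linarith
      set lam : ℝ := (m - 1/2) / m with hlam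
      have h0 : 0 ≤ lam := div_nonneg (by linarith) (le_of_lt hd)
      have h2 : lam ≤ 1/2 := by
        rw [hlam, div_le_iff₀ hd]; nlinarith
      have hcc : (1 - lam) * m + lam * 0 = 1/2 := by
        rw [hlam]; field_simp; ring
      have := aux_convex x m 0 lam h0 (by linarith) hcc
      rw [← hδ] at this
      nlinarith [mul_nonneg h0 (sub_nonneg.mpr hf0),
        mul_nonneg (by linarith : (0:ℝ) ≤ 1/2 - lam) (by linarith : (0:ℝ) ≤ Δ - δ)]
  have hpos : (0:ℝ) < Δ - δ := by linarith
  have hq : (∑ j, |1/2 - x j| - δ) / (Δ - δ) ≤ 1/2 := by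
    rw [div_le_iff₀ hpos]; linarith
  linarith
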